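/- arXiv:2601.11444 — 2 statements merged into one kernel-verified Lean document; each statement's English description precedes it below -/
import Mathlib

section
/- Equality H(a) + H(b) = H(a+b) for the harmonic mean holds if and only if there exists \lambda > 0 with a = \lambda b. -/
open Finset

theorem harmonic_mean_superadditive_eq_iff (K : ℕ) (hK : 1 ≤ K)
    (a b : Fin K → ℝ) (ha : ∀ k, 0 < a k) (hb : ∀ k, 0 < b k) :
    (((K : ℝ)⁻¹ * ∑ k, (a k)⁻¹)⁻¹) + (((K : ℝ)⁻¹ * ∑ k, (b k)⁻¹)⁻¹) =
      ((K : ℝ)⁻¹ * ∑ k, (a k + b k)⁻¹)⁻¹ ↔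
    ∃ l : ℝ, 0 < l ∧ a = fun k => l * b k := by
  have hKpos : (0:ℝ) < K := by exact_mod_cast Nat.lt_of_lt_of_le Nat.zero_lt_one hK
  haveI : Nonempty (Fin K) := ⟨⟨0, hK⟩⟩
  set A := ∑ k, (a k)⁻¹ with hA
  set B := ∑ k, (b k)⁻¹ with hB
  set C := ∑ k, (a k + b k)⁻¹ with hC
  have hApos : 0 < A := Finset.sum_pos (fun k _ => inv_pos.mpr (ha k)) univ_nonempty
  have hBpos : 0 < B := Finset.sum_pos (fun k _ => inv_pos.mpr (hb k)) univ_nonempty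
  have hCpos : 0 < C := Finset.sum_pos
    (fun k _ => inv_pos.mpr (add_pos (ha k) (hb k))) univ_nonempty
  constructor
  · intro h
    have hCeq : C * (A + B) = A * B := by
      field_simp at h
      nlinarith [hApos, hBpos, hCpos, hKpos, h]
    set t := B / (A + B) with ht
    have hABpos : 0 < A + B := add_pos hApos hBpos
    have h1t : 1 - t = A / (A + B) := by rw [ht]; field_simp; ring
    have hfid : ∀ k : Fin K,
        t^2 * (a k)⁻¹ + (1-t)^2 * (b k)⁻¹ - (a k + b k)⁻¹ =
        (t * b k - (1-t) * a k)^2 / (a k * b k * (a k + b k)) := by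
      intro k
      have ha' := (ha k).ne'
      have hb' := (hb k).ne'
      have hab' := (add_pos (ha k) (hb k)).ne'
      field_simp
      ring
    have hsum : ∑ k, (t^2 * (a k)⁻¹ + (1-t)^2 * (b k)⁻¹ - (a k + b k)⁻¹) = 0 := by
      rw [Finset.sum_sub_distrib, Finset.sum_add_distrib, ← Finset.mul_sum,
        ← Finset.mul_sum, ← hA, ← hB, ← hC, ht, h1t]
      field_simp
      nlinarith [hCeq]
    have hzero : ∀ k ∈ Finset.univ, (t * b k - (1-t) * a k)^2 /
        (a k * b k * (a k + b k)) = 0 := by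
      rw [← Finset.sum_eq_zero_iff_of_nonneg]
      · rw [← hsum]
        exact Finset.sum_congr rfl fun k _ => (hfid k).symm
      · intro k _
        exact div_nonneg (sq_nonneg _)
          (mul_pos (mul_pos (ha k) (hb k)) (add_pos (ha k) (hb k))).le
    refine ⟨B / A, div_pos hBpos hApos, funext fun k => ?_⟩
    have hk := hzero k (Finset.mem_univ k)
    have hden : a k * b k * (a k + b k) ≠ 0 :=
      (mul_pos (mul_pos (ha k) (hb k)) (add_pos (ha k) (hb k))).ne'
    have hsq : (t * b k - (1-t) * a k)^2 = 0 := by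
      rcases div_eq_zero_iff.mp hk with h' | h'
      · exact h'
      · exact absurd h' hden
    have h0 : t * b k - (1-t) * a k = 0 := by
      exact pow_eq_zero_iff two_ne_zero |>.mp hsq
    rw [ht, h1t] at h0
    have hba : B * b k = A * a k := by
      field_simp [hABpos.ne'] at h0
      linarith
    rw [div_mul_eq_mul_div, eq_div_iff hApos.ne']
    linarith
  · rintro ⟨l, hl, rfl⟩
    have hAB : A = l⁻¹ * B := by
      rw [hA, hB, Finset.mul_sum]
      exact Finset.sum_congr rfl fun k _ => by
        rw [mul_inv]
    have hCB : C = (1 + l)⁻¹ * B := by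
      rw [hC, hB, Finset.mul_sum]
      refine Finset.sum_congr rfl fun k _ => ?_
      have : l * b k + b k = (1 + l) * b k := by ring
      rw [this, mul_inv]
    rw [hAB, hCB]
    have hb' : B ≠ 0 := hBpos.ne'
    have hl' : l ≠ 0 := hl.ne'
    have h1l : (1:ℝ) + l ≠ 0 := by positivity
    field_simp
    ring
end

section
/- Non-commutativity of diffusion and PoE for isotropic Gaussians: let \alpha_1,...,\alpha_K > 0 and \gamma_t \in (0,1). Define c^{PoE} = \gamma_t (\frac{1}{K}\sum_k \alpha_k^{-1})^{-1} + (1-\gamma_t) and c^{notPoE} = (\frac{1}{K}\sum_k (\gamma_t \alpha_k + 1 - \gamma_t)^{-1})^{-1}. Then c^{PoE} \le c^{notPoE}, with equality if and only if \alpha_1 = \dots = \alpha_K. -/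
open Finset

theorem diffusion_poe_noncommute (K : ℕ) (hK : 2 ≤ K)
    (α : Fin K → ℝ) (hα : ∀ k, 0 < α k)
    (γ : ℝ) (hγ0 : 0 < γ) (hγ1 : γ < 1) :
    (γ * ((K : ℝ)⁻¹ * ∑ k, (α k)⁻¹)⁻¹ + (1 - γ) ≤
        ((K : ℝ)⁻¹ * ∑ k, (γ * α k + 1 - γ)⁻¹)⁻¹) ∧
    (γ * ((K : ℝ)⁻¹ * ∑ k, (α k)⁻¹)⁻¹ + (1 - γ) =
        ((K : ℝ)⁻¹ * ∑ k, (γ * α k + 1 - γ)⁻¹)⁻¹ ↔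
      ∀ k j, α k = α j) := by
  have hKpos : 0 < K := by omega
  have hn : (0:ℝ) < (K:ℝ) := by exact_mod_cast hKpos
  have hγ' : 0 < 1 - γ := by linarith
  have : Nonempty (Fin K) := ⟨⟨0, hKpos⟩⟩
  set β : Fin K → ℝ := fun k => (α k)⁻¹ with hβdef
  have hβpos : ∀ k, 0 < β k := fun k => inv_pos.mpr (hα k)
  have hhpos : ∀ k, 0 < γ + (1 - γ) * β k :=
    fun k => add_pos hγ0 (mul_pos hγ' (hβpos k))
  set B : ℝ := (K:ℝ)⁻¹ * ∑ k, β k with hBdef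
  have hSpos : 0 < ∑ k, β k := Finset.sum_pos (fun k _ => hβpos k) univ_nonempty
  have hBpos : 0 < B := mul_pos (inv_pos.mpr hn) hSpos
  have hSB : ∑ k, β k = (K:ℝ) * B := by
    rw [hBdef]; field_simp
  set hB : ℝ := γ + (1 - γ) * B with hhBdef
  have hhBpos : 0 < hB := add_pos hγ0 (mul_pos hγ' hBpos)
  have hdpos : ∀ k, 0 < γ * α k + 1 - γ := by
    intro k
    have := mul_pos hγ0 (hα k)
    linarith
  have hinv : ∀ k, (γ * α k + 1 - γ)⁻¹ = β k / (γ + (1 - γ) * β k) := by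
    intro k
    have h1 : α k * (α k)⁻¹ = 1 := mul_inv_cancel₀ (hα k).ne'
    have key : γ + (1 - γ) * β k = β k * (γ * α k + 1 - γ) := by
      simp only [hβdef]
      linear_combination (-γ) * h1
    rw [key, div_mul_eq_div_div, div_self (hβpos k).ne', one_div]
  set F : Fin K → ℝ := fun k =>
    B / hB + γ / hB ^ 2 * (β k - B) - (γ * α k + 1 - γ)⁻¹ with hFdef
  have hFeq : ∀ k, F k = γ * (1 - γ) * (β k - B) ^ 2 /
      ((γ + (1 - γ) * β k) * hB ^ 2) := by
    intro k
    have h3 := hhpos k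
    rw [hFdef]
    simp only
    rw [hinv k]
    generalize hD : γ + (1 - γ) * β k = D at h3 ⊢
    field_simp
    subst hD
    rw [hhBdef]
    ring
  have hFnonneg : ∀ k, 0 ≤ F k := by
    intro k
    rw [hFeq k]
    have h3 := hhpos k
    positivity
  set T : ℝ := ∑ k, (γ * α k + 1 - γ)⁻¹ with hTdef
  have hTpos : 0 < T := Finset.sum_pos (fun k _ => inv_pos.mpr (hdpos k)) univ_nonempty
  have hsumF : ∑ k, F k = (K:ℝ) * B / hB - T := by
    rw [hTdef]
    simp only [hFdef, Finset.sum_sub_distrib, Finset.sum_add_distrib,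
      Finset.sum_const, card_univ, Fintype.card_fin, nsmul_eq_mul,
      ← Finset.mul_sum, Finset.sum_sub_distrib, hSB]
    ring
  have hT_le : T ≤ (K:ℝ) * B / hB := by
    have h0 : (0:ℝ) ≤ ∑ k, F k := Finset.sum_nonneg (fun k _ => hFnonneg k)
    rw [hsumF] at h0
    linarith [h0]
  have hLHS : γ * ((K:ℝ)⁻¹ * ∑ k, (α k)⁻¹)⁻¹ + (1 - γ) = hB / B := by
    have hEB : (K:ℝ)⁻¹ * ∑ k, (α k)⁻¹ = B := rfl
    rw [hEB, hhBdef]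
    field_simp
  have hRHS : ((K:ℝ)⁻¹ * ∑ k, (γ * α k + 1 - γ)⁻¹)⁻¹ = ((K:ℝ)⁻¹ * T)⁻¹ := rfl
  have hTn_pos : 0 < (K:ℝ)⁻¹ * T := mul_pos (inv_pos.mpr hn) hTpos
  have hKB : (K:ℝ)⁻¹ * ((K:ℝ) * B / hB) = B / hB := by
    field_simp
  constructor
  · rw [hLHS, hRHS]
    have h1 : (K:ℝ)⁻¹ * T ≤ B / hB := by
      calc (K:ℝ)⁻¹ * T ≤ (K:ℝ)⁻¹ * ((K:ℝ) * B / hB) :=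
            mul_le_mul_of_nonneg_left hT_le (by positivity)
        _ = B / hB := hKB
    have h2 : (B / hB)⁻¹ ≤ ((K:ℝ)⁻¹ * T)⁻¹ := inv_anti₀ hTn_pos h1
    rwa [inv_div] at h2
  · rw [hLHS, hRHS]
    constructor
    · intro heq
      have hinveq : (K:ℝ)⁻¹ * T = B / hB := by
        have := congrArg (·⁻¹) heq
        simpa [inv_div, inv_inv] using this.symm
      have hTeq : T = (K:ℝ) * B / hB := by
        have h := hinveq
        field_simp at h ⊢
        linarith
      have hsum0 : ∑ k, F k = 0 := by rw [hsumF, hTeq]; ring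
      have hFzero : ∀ k ∈ Finset.univ, F k = 0 :=
        (Finset.sum_eq_zero_iff_of_nonneg (fun k _ => hFnonneg k)).mp hsum0
      have hβB : ∀ k, β k = B := by
        intro k
        have hz := hFzero k (Finset.mem_univ k)
        rw [hFeq k] at hz
        have h3 := hhpos k
        have hsq : (β k - B) ^ 2 = 0 := by
          by_contra hne
          have hsqpos : 0 < (β k - B) ^ 2 := lt_of_le_of_ne (sq_nonneg _) (Ne.symm hne)
          have hpos : 0 < γ * (1 - γ) * (β k - B) ^ 2 / ((γ + (1 - γ) * β k) * hB ^ 2) := by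
            positivity
          linarith
        have := pow_eq_zero_iff (n := 2) (by norm_num) |>.mp hsq
        linarith
      intro k j
      have hk := hβB k
      have hj := hβB j
      have hkj : (α k)⁻¹ = (α j)⁻¹ := by
        rw [show (α k)⁻¹ = β k from rfl, show (α j)⁻¹ = β j from rfl, hk, hj]
      exact inv_injective hkj
    · intro hconst
      have hβconst : ∀ k, β k = β ⟨0, hKpos⟩ := by
        intro k; simp only [hβdef]; rw [hconst k ⟨0, hKpos⟩]
      have hBeq : B = β ⟨0, hKpos⟩ := by
        rw [hBdef]
        rw [Finset.sum_congr rfl (fun k _ => hβconst k)]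
        simp [Finset.sum_const, card_univ]
        field_simp
      have hTeq : T = (K:ℝ) * B / hB := by
        rw [hTdef]
        have hc : ∀ k, (γ * α k + 1 - γ)⁻¹ = B / hB := by
          intro k
          rw [hinv k, hβconst k, ← hBeq]
        rw [Finset.sum_congr rfl (fun k _ => hc k)]
        simp [Finset.sum_const, card_univ]
        ring
      rw [hTeq, hKB, inv_div]
end
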